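/- Let L be discrete Laplace with parameter b ∈ (0,1) (pmf p_L(x) = ((1−b)/(1+b)) b^{|x|} for x ∈ ℤ) and U uniform on (−1/2, 1/2), independent. Then the cdf of L + U is given by: F(x) = (b^{−[x]}/(1+b))(b + (x − [x] + 1/2)(1−b)) for x ≤ 0, and F(x) = 1 − (b^{[x]}/(1+b))(b + ([x] − x + 1/2)(1−b)) for x > 0, where [x] denotes the nearest integer to x. -/

import Mathlib

open MeasureTheory Real ProbabilityTheory

/-- cdf of `Tulap(0,b,0)`, the distribution of `DLap(b) + Unif(-1/2,1/2)`. -/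
noncomputable def tulapCdf0 (b : ℝ) (x : ℝ) : ℝ :=
  if x ≤ 0 then b ^ (-(round x)) / (1 + b) * (b + (x - round x + 1/2) * (1 - b))
  else 1 - b ^ (round x) / (1 + b) * (b + ((round x : ℝ) - x + 1/2) * (1 - b))

section aux

variable {b : ℝ}

private lemma pL_summable (hb0 : 0 < b) (hb1 : b < 1) :
    Summable (fun z : ℤ => (1 - b) / (1 + b) * b ^ z.natAbs) := by
  apply Summable.of_nat_of_neg
  · simpa using ((summable_geometric_of_lt_one hb0.le hb1).mul_left ((1 - b) / (1 + b)))
  · simpa using ((summable_geometric_of_lt_one hb0.le hb1).mul_left ((1 - b) / (1 + b)))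

private lemma mask_summable (hb0 : 0 < b) (hb1 : b < 1) (p : ℤ → Prop) [DecidablePred p] :
    Summable (fun z : ℤ => if p z then (1 - b) / (1 + b) * b ^ z.natAbs else 0) := by
  have h := (pL_summable hb0 hb1).indicator {z : ℤ | p z}
  convert h using 2 with z
  case e'_3 => rfl
  simp [Set.indicator_apply]

private lemma tail_tsum (hb0 : 0 < b) (hb1 : b < 1) (m : ℤ) (hm : m ≤ 0) :
    ∑' z : ℤ, (if z ≤ m then (1 - b) / (1 + b) * b ^ z.natAbs else 0)
      = b ^ (-m) / (1 + b) := by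
  have hb0' : b ≠ 0 := ne_of_gt hb0
  have hinj : Function.Injective (fun k : ℕ => m - k) := by
    intro a b h; simp only at h; omega
  have hsupp : Function.support
      (fun z : ℤ => if z ≤ m then (1 - b) / (1 + b) * b ^ z.natAbs else 0)
      ⊆ Set.range (fun k : ℕ => m - k) := by
    intro z hz
    by_cases h : z ≤ m
    · refine ⟨(m - z).toNat, ?_⟩
      show m - ((m - z).toNat : ℤ) = z
      omega
    · simp only [Function.mem_support, if_neg h, ne_eq, not_true_eq_false] at hz
  rw [← hinj.tsum_eq hsupp]
  have hterm : ∀ k : ℕ, (if (m - (k:ℤ)) ≤ m then (1 - b) / (1 + b) * b ^ (m - (k:ℤ)).natAbs else 0)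
      = ((1 - b) / (1 + b) * b ^ (-m)) * b ^ k := by
    intro k
    rw [if_pos (by omega)]
    have h1 : (((m - (k:ℤ)).natAbs : ℤ)) = -m + k := by omega
    have h2 : b ^ (m - (k:ℤ)).natAbs = b ^ (-m) * b ^ k := by
      rw [← zpow_natCast b (m - (k:ℤ)).natAbs, h1, zpow_add₀ hb0', zpow_natCast]
    rw [h2]; ring
  calc (∑' k : ℕ, (if (m - (k:ℤ)) ≤ m then (1 - b) / (1 + b) * b ^ (m - (k:ℤ)).natAbs else 0))
      = ∑' k : ℕ, ((1 - b) / (1 + b) * b ^ (-m)) * b ^ k := tsum_congr hterm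
    _ = ((1 - b) / (1 + b) * b ^ (-m)) * (1 - b)⁻¹ := by
        rw [tsum_mul_left, tsum_geometric_of_lt_one hb0.le hb1]
    _ = b ^ (-m) / (1 + b) := by
        have h1 : (1:ℝ) - b ≠ 0 := by linarith
        have h2 : (1:ℝ) + b ≠ 0 := by linarith
        field_simp

private lemma head_tsum (hb0 : 0 < b) (hb1 : b < 1) (m : ℤ) (hm : 0 ≤ m) :
    ∑' z : ℤ, (if m ≤ z then (1 - b) / (1 + b) * b ^ z.natAbs else 0)
      = b ^ m / (1 + b) := by
  have h := tail_tsum hb0 hb1 (-m) (by omega)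
  rw [← (Equiv.neg ℤ).tsum_eq, neg_neg] at h
  simp only [Equiv.neg_apply] at h
  rw [← h]
  apply tsum_congr; intro z
  rw [Int.natAbs_neg]
  congr 1
  simp

private lemma total_tsum (hb0 : 0 < b) (hb1 : b < 1) :
    ∑' z : ℤ, (1 - b) / (1 + b) * b ^ z.natAbs = 1 := by
  have hsplit : ∀ z : ℤ, (1 - b) / (1 + b) * b ^ z.natAbs
      = (if z ≤ 0 then (1 - b) / (1 + b) * b ^ z.natAbs else 0)
        + (if 1 ≤ z then (1 - b) / (1 + b) * b ^ z.natAbs else 0) := by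
    intro z
    by_cases h : z ≤ 0
    · rw [if_pos h, if_neg (by omega)]; ring
    · rw [if_neg h, if_pos (by omega)]; ring
  rw [tsum_congr hsplit,
    Summable.tsum_add (mask_summable hb0 hb1 _) (mask_summable hb0 hb1 _),
    tail_tsum hb0 hb1 0 le_rfl, head_tsum hb0 hb1 1 (by omega)]
  have h2 : (1:ℝ) + b ≠ 0 := by linarith
  simp only [neg_zero, zpow_zero, zpow_one]
  field_simp

private lemma tail_tsum' (hb0 : 0 < b) (hb1 : b < 1) (m : ℤ) (hm : 0 ≤ m) :
    ∑' z : ℤ, (if z ≤ m - 1 then (1 - b) / (1 + b) * b ^ z.natAbs else 0)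
      = 1 - b ^ m / (1 + b) := by
  have hsplit : ∀ z : ℤ, (if z ≤ m - 1 then (1 - b) / (1 + b) * b ^ z.natAbs else 0)
      = (1 - b) / (1 + b) * b ^ z.natAbs
        - (if m ≤ z then (1 - b) / (1 + b) * b ^ z.natAbs else 0) := by
    intro z
    by_cases h : z ≤ m - 1
    · rw [if_pos h, if_neg (by omega)]; ring
    · rw [if_neg h, if_pos (by omega)]; ring
  rw [tsum_congr hsplit,
    Summable.tsum_sub (pL_summable hb0 hb1) (mask_summable hb0 hb1 _),
    total_tsum hb0 hb1, head_tsum hb0 hb1 m hm]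

end aux

/-- if `L ~ DLap(b)` and `U ~ Unif(-1/2,1/2)` are independent, then the cdf
of `L + U` is the Tulap(0,b,0) cdf. -/
theorem dlap_add_unif_cdf (b : ℝ) (hb : b ∈ Set.Ioo (0:ℝ) 1)
    {Ω : Type*} [MeasurableSpace Ω] (P : Measure Ω) [IsProbabilityMeasure P]
    (L : Ω → ℤ) (U : Ω → ℝ) (hLm : Measurable L) (hUm : Measurable U)
    (hL : ∀ z : ℤ, (P {ω | L ω = z}).toReal = (1 - b) / (1 + b) * b ^ z.natAbs)
    (hU : ∀ s : Set ℝ, MeasurableSet s →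
      P (U ⁻¹' s) = volume (s ∩ Set.Ioo (-(1:ℝ)/2) (1/2)))
    (hind : IndepFun L U P) :
    ∀ x : ℝ, (P {ω | (L ω : ℝ) + U ω ≤ x}).toReal = tulapCdf0 b x := by
  obtain ⟨hb0, hb1⟩ := hb
  have hb0' : b ≠ 0 := ne_of_gt hb0
  have h1b : (1:ℝ) + b ≠ 0 := by linarith
  intro x
  set n : ℤ := round x with hn
  have hnx1 : (n:ℝ) ≤ x + 1/2 := by rw [hn, round_eq]; exact Int.floor_le _
  have hnx2 : x + 1/2 < n + 1 := by rw [hn, round_eq]; exact Int.lt_floor_add_one _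
  set s : ℤ → Set Ω := fun z => L ⁻¹' {z} ∩ U ⁻¹' Set.Iic (x - z) with hs
  have hsm : ∀ z, MeasurableSet (s z) := fun z =>
    (hLm (measurableSet_singleton z)).inter (hUm measurableSet_Iic)
  have hdisj : Pairwise (Function.onFun Disjoint s) := by
    intro z z' hzz'
    simp only [Function.onFun, hs]
    apply Set.disjoint_left.mpr
    rintro ω ⟨h1, _⟩ ⟨h2, _⟩
    exact hzz' ((Set.mem_singleton_iff.mp h1).symm.trans (Set.mem_singleton_iff.mp h2))
  have hunion : {ω | (L ω : ℝ) + U ω ≤ x} = ⋃ z : ℤ, s z := by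
    ext ω
    simp only [Set.mem_setOf_eq, Set.mem_iUnion, hs, Set.mem_inter_iff, Set.mem_preimage,
      Set.mem_singleton_iff, Set.mem_Iic]
    constructor
    · intro h; exact ⟨L ω, rfl, by linarith⟩
    · rintro ⟨z, hz, hu⟩; rw [hz]; linarith
  have hPz : ∀ z : ℤ, P (s z)
      = P (L ⁻¹' {z}) * volume (Set.Iic (x - z) ∩ Set.Ioo (-(1:ℝ)/2) (1/2)) := by
    intro z
    rw [hs]
    rw [hind.measure_inter_preimage_eq_mul _ _ (measurableSet_singleton z) measurableSet_Iic,
      hU _ measurableSet_Iic]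
  have hps : ∀ z : ℤ, L ⁻¹' ({z} : Set ℤ) = {ω | L ω = z} := fun z => rfl
  have hvol : ∀ z : ℤ, (volume (Set.Iic (x - z) ∩ Set.Ioo (-(1:ℝ)/2) (1/2))).toReal
      = (if z ≤ n - 1 then 1 else if z = n then x - n + 1/2 else 0) := by
    intro z
    rcases lt_trichotomy z n with h | h | h
    · rw [if_pos (by omega)]
      have hz : (z:ℝ) ≤ (n:ℝ) - 1 := by
        have : z ≤ n - 1 := by omega
        calc (z:ℝ) ≤ ((n - 1 : ℤ) : ℝ) := by exact_mod_cast this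
          _ = (n:ℝ) - 1 := by push_cast; ring
      have hsub : Set.Ioo (-(1:ℝ)/2) (1/2) ⊆ Set.Iic (x - z) := by
        intro y hy
        simp only [Set.mem_Ioo] at hy
        simp only [Set.mem_Iic]
        linarith [hy.2]
      rw [Set.inter_eq_self_of_subset_right hsub, Real.volume_Ioo]
      norm_num
    · rw [if_neg (by omega), if_pos h]
      have heq : Set.Iic (x - z) ∩ Set.Ioo (-(1:ℝ)/2) (1/2) = Set.Ioc (-(1:ℝ)/2) (x - z) := by
        have hz : (z:ℝ) = n := by exact_mod_cast h
        ext y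
        simp only [Set.mem_inter_iff, Set.mem_Iic, Set.mem_Ioo, Set.mem_Ioc]
        constructor
        · rintro ⟨h1, h2, _⟩; exact ⟨h2, h1⟩
        · rintro ⟨h1, h2⟩; exact ⟨h2, h1, by linarith⟩
      have hz : (z:ℝ) = n := by exact_mod_cast h
      rw [heq, Real.volume_Ioc, ENNReal.toReal_ofReal (by linarith)]
      linarith
    · rw [if_neg (by omega), if_neg (by omega)]
      have hz : (n:ℝ) + 1 ≤ z := by
        have : n + 1 ≤ z := by omega
        calc (n:ℝ) + 1 = ((n + 1 : ℤ) : ℝ) := by push_cast; ring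
          _ ≤ (z:ℝ) := by exact_mod_cast this
      have heq : Set.Iic (x - z) ∩ Set.Ioo (-(1:ℝ)/2) (1/2) = ∅ := by
        ext y
        simp only [Set.mem_inter_iff, Set.mem_Iic, Set.mem_Ioo, Set.mem_empty_iff_false,
          iff_false, not_and]
        intro h1 h2
        linarith
      rw [heq]
      simp
  have hterm : ∀ z : ℤ, (P (s z)).toReal
      = (if z ≤ n - 1 then (1 - b) / (1 + b) * b ^ z.natAbs else 0)
        + (if z = n then (x - n + 1/2) * ((1 - b) / (1 + b) * b ^ n.natAbs) else 0) := by
    intro z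
    rw [hPz z, ENNReal.toReal_mul, hps z, hL z, hvol z]
    by_cases h1 : z ≤ n - 1
    · rw [if_pos h1, if_pos h1, if_neg (by omega)]; ring
    · by_cases h2 : z = n
      · subst h2
        rw [if_neg h1, if_neg h1, if_pos rfl, if_pos rfl]; ring
      · rw [if_neg h1, if_neg h2, if_neg h1, if_neg h2]; ring
  have key : (P {ω | (L ω : ℝ) + U ω ≤ x}).toReal
      = (∑' z : ℤ, (if z ≤ n - 1 then (1 - b) / (1 + b) * b ^ z.natAbs else 0))
        + (x - n + 1/2) * ((1 - b) / (1 + b) * b ^ n.natAbs) := by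
    rw [hunion, measure_iUnion hdisj hsm,
      ENNReal.tsum_toReal_eq (fun z => measure_ne_top P _), tsum_congr hterm,
      Summable.tsum_add (mask_summable hb0 hb1 _) (hasSum_ite_eq n _).summable,
      tsum_ite_eq]
  rw [key]
  by_cases hx : x ≤ 0
  · have hn0 : n ≤ 0 := by
      have h1 : (n:ℝ) < 1 := by linarith
      have : n < 1 := by exact_mod_cast h1
      omega
    have hna : b ^ n.natAbs = b ^ (-n) := by
      rw [← zpow_natCast b n.natAbs]
      congr 1
      omega
    rw [tail_tsum hb0 hb1 (n - 1) (by omega), hna, tulapCdf0, if_pos hx, ← hn]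
    have hmn : b ^ (-(n - 1)) = b ^ (-n) * b := by
      have h : -(n - 1) = -n + 1 := by ring
      rw [h, zpow_add₀ hb0', zpow_one]
    rw [hmn]
    have h1 : (1:ℝ) - b ≠ 0 := by linarith
    field_simp
  · have hn0 : 0 ≤ n := by
      have h1 : (-1:ℝ) < n := by linarith
      have : (-1:ℤ) < n := by exact_mod_cast h1
      omega
    have hna : b ^ n.natAbs = b ^ (n : ℤ) := by
      rw [← zpow_natCast b n.natAbs]
      congr 1
      omega
    rw [tail_tsum' hb0 hb1 n hn0, hna, tulapCdf0, if_neg hx, ← hn]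
    field_simp
    ring
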